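/- Let X be a finite set and t ↦ W(t), t ∈ [0,1], a continuous family of rate matrices on X with symmetric support, such that for every initial probability distribution p₀ the master equation has a strictly positive solution on (0,1] with p(0) = p₀, with finite total entropy flow Q(p₀) and finite total entropy production σ(p₀). Let π be the induced transition matrix (πp₀ = p(1)). For each island c of π let q^c be a minimizer of σ among distributions supported in c, with minimal value σ_min(c), and set q = Σ_c w(c) q^c for any strictly positive island weights w; assume supp p₀^c ⊆ supp q^c for every island c with p₀(c) > 0. Then the total entropy flow incurred in applying π to p₀ satisfies Q(p₀) = [S(p₀) − S(πp₀)] + [D(p₀‖q) − D(πp₀‖πq)] + Σ_{c∈L(π)} p₀(c) σ_min(c) = [K(p₀‖q) − K(πp₀‖πq)] + Σ_{c∈L(π)} p₀(c) σ_min(c). -/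

import Mathlib

open MeasureTheory

/-- A probability distribution on a finite set. -/
def IsDist {X : Type*} [Fintype X] (p : X → ℝ) : Prop :=
  (∀ x, 0 ≤ p x) ∧ ∑ x, p x = 1

/-- The relation whose equivalence closure defines the islands of the
stochastic matrix `π`. -/
def islandRel {X : Type*} (π : X → X → ℝ) (a b : X) : Prop :=
  ∃ z, 0 < π a z ∧ 0 < π b z

/-- The island of `π` containing `x0`. -/
def islandOf {X : Type*} (π : X → X → ℝ) (x0 : X) : Set X :=
  {x | Relation.EqvGen (islandRel π) x x0}

/-- Shannon entropy of a distribution on a finite set. -/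
noncomputable def shannonH {X : Type*} [Fintype X] (p : X → ℝ) : ℝ :=
  -∑ x, p x * Real.log (p x)

/-- KL divergence between two distributions on a finite set. -/
noncomputable def klDiv' {X : Type*} [Fintype X] (p q : X → ℝ) : ℝ :=
  ∑ x, p x * Real.log (p x / q x)

/-- Cross entropy between two distributions on a finite set. -/
noncomputable def crossEnt {X : Type*} [Fintype X] (p q : X → ℝ) : ℝ :=
  -∑ x, p x * Real.log (q x)

/-- The entropy-flow rate at time `t` along the trajectory `p`. -/
noncomputable def efRate {X : Type*} [Fintype X] [DecidableEq X]
    (W : ℝ → X → X → ℝ) (p : ℝ → X → ℝ) (t : ℝ) : ℝ :=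
  ∑ x, ∑ x', if x = x' then 0 else
    W t x x' * p t x' * Real.log (W t x x' / W t x' x)

/-- The entropy-production rate at time `t` along the trajectory `p`. -/
noncomputable def epRate {X : Type*} [Fintype X] [DecidableEq X]
    (W : ℝ → X → X → ℝ) (p : ℝ → X → ℝ) (t : ℝ) : ℝ :=
  ∑ x, ∑ x', if x = x' then 0 else
    W t x x' * p t x' * Real.log ((W t x x' * p t x') / (W t x' x * p t x))

/-! ### Auxiliary lemmas -/

section Helpers
variable {X : Type*} [Fintype X]

lemma klDiv'_le_chi {p q : X → ℝ} (hp : ∀ x, 0 ≤ p x) (hq : ∀ x, 0 ≤ q x)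
    (hsum : ∑ x, p x = ∑ x, q x) (hsupp : ∀ x, q x = 0 → p x = 0) :
    klDiv' p q ≤ ∑ x, (p x - q x) ^ 2 / q x := by
  have key : ∀ x, p x * Real.log (p x / q x) ≤ (p x - q x) ^ 2 / q x + (p x - q x) := by
    intro x
    rcases eq_or_lt_of_le (hq x) with h | h
    · have hp0 := hsupp x h.symm
      simp [← h, hp0]
    rcases eq_or_lt_of_le (hp x) with h' | h'
    · rw [← h']
      have : (0 - q x) ^ 2 / q x + (0 - q x) = 0 := by
        field_simp; ring
      rw [this]; simp
    · have hlog : Real.log (p x / q x) ≤ p x / q x - 1 :=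
        Real.log_le_sub_one_of_pos (div_pos h' h)
      have h2 : p x * Real.log (p x / q x) ≤ p x * (p x / q x - 1) :=
        mul_le_mul_of_nonneg_left hlog (le_of_lt h')
      have h3 : p x * (p x / q x - 1) = (p x - q x) ^ 2 / q x + (p x - q x) := by
        field_simp; ring
      linarith
  calc klDiv' p q ≤ ∑ x, ((p x - q x) ^ 2 / q x + (p x - q x)) :=
        Finset.sum_le_sum fun x _ => key x
    _ = ∑ x, (p x - q x) ^ 2 / q x := by
        rw [Finset.sum_add_distrib, Finset.sum_sub_distrib, hsum]; ring

lemma klDiv'_nonneg {p q : X → ℝ} (hp : ∀ x, 0 ≤ p x) (hq : ∀ x, 0 ≤ q x)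
    (hsum : ∑ x, p x = ∑ x, q x) (hsupp : ∀ x, q x = 0 → p x = 0) :
    0 ≤ klDiv' p q := by
  have key : ∀ x, p x - q x ≤ p x * Real.log (p x / q x) := by
    intro x
    rcases eq_or_lt_of_le (hq x) with h | h
    · have hp0 := hsupp x h.symm
      simp [← h, hp0]
    rcases eq_or_lt_of_le (hp x) with h' | h'
    · simp [← h']; linarith
    · have hlog : Real.log (q x / p x) ≤ q x / p x - 1 :=
        Real.log_le_sub_one_of_pos (div_pos h h')
      have hrw : Real.log (q x / p x) = - Real.log (p x / q x) := by
        rw [← Real.log_inv]; congr 1; field_simp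
      rw [hrw] at hlog
      have h2 : p x * (1 - q x / p x) ≤ p x * Real.log (p x / q x) := by
        nlinarith
      have h3 : p x * (1 - q x / p x) = p x - q x := by field_simp
      linarith
  have : ∑ x, (p x - q x) ≤ klDiv' p q := Finset.sum_le_sum fun x _ => key x
  rw [Finset.sum_sub_distrib, hsum] at this
  linarith

lemma klDiv'_eq_cross_sub_shannon {p q : X → ℝ} (hp : ∀ x, 0 ≤ p x)
    (hsupp : ∀ x, q x = 0 → p x = 0) :
    klDiv' p q = crossEnt p q - shannonH p := by
  unfold klDiv' crossEnt shannonH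
  rw [neg_sub_neg, ← Finset.sum_sub_distrib]
  apply Finset.sum_congr rfl
  intro x _
  rcases eq_or_lt_of_le (hp x) with h' | h'
  · simp [← h']
  · have hq : q x ≠ 0 := fun h => by simp [hsupp x h] at h'
    rw [Real.log_div (ne_of_gt h') hq]; ring

@[simp] lemma klDiv'_self (p : X → ℝ) : klDiv' p p = 0 := by
  unfold klDiv'
  apply Finset.sum_eq_zero
  intro x _
  rcases eq_or_ne (p x) 0 with h | h
  · simp [h]
  · simp [div_self h]

lemma lin_swap (S : Finset X) (c : X → ℝ) (f : X → X → ℝ) (g : X → ℝ) :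
    ∑ x, (∑ r ∈ S, c r * f r x) * g x = ∑ r ∈ S, c r * ∑ x, f r x * g x := by
  have : ∀ x, (∑ r ∈ S, c r * f r x) * g x = ∑ r ∈ S, c r * (f r x * g x) := by
    intro x; rw [Finset.sum_mul]; exact Finset.sum_congr rfl fun r _ => by ring
  simp only [this]
  rw [Finset.sum_comm]
  exact Finset.sum_congr rfl fun r _ => by rw [← Finset.mul_sum]

lemma lin_swap' (S : Finset X) (c : X → ℝ) (f : X → X → ℝ) (g : X → ℝ) :
    ∑ x, g x * (∑ r ∈ S, c r * f r x) = ∑ r ∈ S, c r * ∑ x, g x * f r x := by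
  have : ∀ x, g x * (∑ r ∈ S, c r * f r x) = (∑ r ∈ S, c r * f r x) * g x := fun x => by ring
  simp only [this, lin_swap S c f g]
  exact Finset.sum_congr rfl fun r _ => by
    congr 1; exact Finset.sum_congr rfl fun x _ => by ring

lemma rate_algebra [DecidableEq X]
    (Wt : X → X → ℝ) (p dp : X → ℝ)
    (hoff : ∀ x x', x ≠ x' → 0 ≤ Wt x x')
    (hcol : ∀ x', ∑ x, Wt x x' = 0)
    (hsym : ∀ x x', x ≠ x' → (0 < Wt x x' ↔ 0 < Wt x' x))
    (hp : ∀ x, 0 < p x)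
    (hdp : ∀ x, dp x = ∑ x', Wt x x' * p x') :
    (∑ x, ∑ x', if x = x' then 0 else
        Wt x x' * p x' * Real.log ((Wt x x' * p x') / (Wt x' x * p x)))
    - (∑ x, ∑ x', if x = x' then 0 else
        Wt x x' * p x' * Real.log (Wt x x' / Wt x' x))
    = -∑ x, (Real.log (p x) + 1) * dp x := by
  have step1 : ∀ x x', (if x = x' then 0 else
        Wt x x' * p x' * Real.log ((Wt x x' * p x') / (Wt x' x * p x)))
      - (if x = x' then 0 else Wt x x' * p x' * Real.log (Wt x x' / Wt x' x))
      = Wt x x' * p x' * (Real.log (p x') - Real.log (p x)) := by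
    intro x x'
    by_cases hxx : x = x'
    · simp [hxx]
    · simp only [if_neg hxx]
      rcases eq_or_lt_of_le (hoff x x' hxx) with hW | hW
      · simp [← hW]
      · have hW' : 0 < Wt x' x := (hsym x x' hxx).mp hW
        rw [Real.log_div (ne_of_gt (mul_pos hW (hp x'))) (ne_of_gt (mul_pos hW' (hp x))),
            Real.log_div (ne_of_gt hW) (ne_of_gt hW'),
            Real.log_mul (ne_of_gt hW) (ne_of_gt (hp x')),
            Real.log_mul (ne_of_gt hW') (ne_of_gt (hp x))]
        ring
  have lhs_eq : (∑ x, ∑ x', if x = x' then 0 else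
        Wt x x' * p x' * Real.log ((Wt x x' * p x') / (Wt x' x * p x)))
    - (∑ x, ∑ x', if x = x' then 0 else
        Wt x x' * p x' * Real.log (Wt x x' / Wt x' x))
    = ∑ x, ∑ x', Wt x x' * p x' * (Real.log (p x') - Real.log (p x)) := by
    rw [← Finset.sum_sub_distrib]
    apply Finset.sum_congr rfl; intro x _
    rw [← Finset.sum_sub_distrib]
    exact Finset.sum_congr rfl fun x' _ => step1 x x'
  rw [lhs_eq]
  have expand : ∀ x x', Wt x x' * p x' * (Real.log (p x') - Real.log (p x))
      = Wt x x' * (p x' * Real.log (p x')) - Real.log (p x) * (Wt x x' * p x') := by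
    intro x x'; ring
  simp only [expand, Finset.sum_sub_distrib]
  have t1 : ∑ x, ∑ x', Wt x x' * (p x' * Real.log (p x')) = 0 := by
    rw [Finset.sum_comm]
    apply Finset.sum_eq_zero; intro x' _
    rw [← Finset.sum_mul, hcol x', zero_mul]
  have t2 : ∀ x, ∑ x', Real.log (p x) * (Wt x x' * p x') = Real.log (p x) * dp x := by
    intro x; rw [← Finset.mul_sum, hdp x]
  rw [t1]
  have t3 : ∑ x, dp x = 0 := by
    simp only [hdp]
    rw [Finset.sum_comm]
    apply Finset.sum_eq_zero; intro x' _
    rw [← Finset.sum_mul, hcol x', zero_mul]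
  have t4 : ∑ x, (Real.log (p x) + 1) * dp x
      = ∑ x, Real.log (p x) * dp x + ∑ x, dp x := by
    rw [← Finset.sum_add_distrib]
    apply Finset.sum_congr rfl; intro x _; ring
  rw [t4, t3]
  simp only [t2]
  ring

lemma B_eq_zero (B C δ : ℝ) (hδ : 0 < δ) (hC : 0 ≤ C)
    (h : ∀ ε : ℝ, |ε| ≤ δ → 0 ≤ ε * B + C * ε ^ 2) : B = 0 := by
  by_contra hB
  have hBpos : 0 < |B| := abs_pos.mpr hB
  set m := min δ (|B| / (2 * C + 1)) with hm
  have hm0 : 0 < m := lt_min hδ (div_pos hBpos (by linarith))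
  have hmδ : m ≤ δ := min_le_left _ _
  have hmB : m ≤ |B| / (2 * C + 1) := min_le_right _ _
  have hmB' : m * (2 * C + 1) ≤ |B| := by
    rw [← le_div_iff₀ (by linarith)]; exact hmB
  set ε := if 0 < B then -m else m with hε
  have hεabs : |ε| ≤ δ := by
    rw [hε]; split_ifs <;>
      simp [abs_of_pos hm0, abs_of_neg (neg_neg_iff_pos.mpr hm0)] <;> linarith
  have hεB : ε * B = -(m * |B|) := by
    rw [hε]; split_ifs with hBp
    · rw [abs_of_pos hBp]; ring
    · rw [abs_of_neg (lt_of_le_of_ne (not_lt.mp hBp) hB)]; ring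
  have hεsq : ε ^ 2 = m ^ 2 := by
    rw [hε]; split_ifs <;> ring
  have := h ε hεabs
  rw [hεB, hεsq] at this
  nlinarith [mul_pos hm0 hBpos, sq_nonneg m]

lemma efRate_comb [DecidableEq X] (W : ℝ → X → X → ℝ) (p : ℝ → X → ℝ) (t : ℝ)
    (S : Finset X) (c : X → ℝ) (ρP : X → ℝ → X → ℝ)
    (h : ∀ x, p t x = ∑ r ∈ S, c r * ρP r t x) :
    efRate W p t = ∑ r ∈ S, c r * efRate W (ρP r) t := by
  unfold efRate
  have key : ∀ x x', (if x = x' then 0 else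
        W t x x' * p t x' * Real.log (W t x x' / W t x' x))
      = ∑ r ∈ S, c r * (if x = x' then 0 else
          W t x x' * ρP r t x' * Real.log (W t x x' / W t x' x)) := by
    intro x x'
    by_cases hxx : x = x'
    · simp [hxx]
    · simp only [if_neg hxx, h x', Finset.sum_mul, Finset.mul_sum]
      exact Finset.sum_congr rfl fun r _ => by ring
  simp only [key]
  have s1 : ∑ x : X, ∑ x' : X, ∑ r ∈ S, c r * (if x = x' then 0 else
        W t x x' * ρP r t x' * Real.log (W t x x' / W t x' x))
      = ∑ x : X, ∑ r ∈ S, ∑ x' : X, c r * (if x = x' then 0 else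
        W t x x' * ρP r t x' * Real.log (W t x x' / W t x' x)) :=
    Finset.sum_congr rfl fun x _ => Finset.sum_comm
  rw [s1, Finset.sum_comm]
  apply Finset.sum_congr rfl
  intro r _
  simp only [← Finset.mul_sum]


lemma ode_unique {X : Type*} [Fintype X]
    (W : ℝ → X → X → ℝ)
    (hWcont : ∀ x x', ContinuousOn (fun t => W t x x') (Set.Icc 0 1))
    (f g : ℝ → X → ℝ)
    (hf : ∀ t ∈ Set.Icc (0:ℝ) 1, ∀ x,
      HasDerivWithinAt (fun s => f s x) (∑ x', W t x x' * f t x') (Set.Icc 0 1) t)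
    (hg : ∀ t ∈ Set.Icc (0:ℝ) 1, ∀ x,
      HasDerivWithinAt (fun s => g s x) (∑ x', W t x x' * g t x') (Set.Icc 0 1) t)
    (h0 : f 0 = g 0) : ∀ t ∈ Set.Icc (0:ℝ) 1, f t = g t := by
  classical
  -- bound on W
  have hM : ∀ x x', ∃ C, ∀ t ∈ Set.Icc (0:ℝ) 1, |W t x x'| ≤ C := by
    intro x x'
    obtain ⟨C, hC⟩ := isCompact_Icc.exists_bound_of_continuousOn (hWcont x x')
    exact ⟨C, fun t ht => by simpa using hC t ht⟩
  choose B hB using hM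
  set M : ℝ := ∑ x, ∑ x', |B x x'| with hMdef
  have hM0 : 0 ≤ M := Finset.sum_nonneg fun x _ => Finset.sum_nonneg fun x' _ => abs_nonneg _
  have hBM : ∀ x x', ∀ t ∈ Set.Icc (0:ℝ) 1, |W t x x'| ≤ M := by
    intro x x' t ht
    refine le_trans (hB x x' t ht) (le_trans (le_abs_self _) ?_)
    calc |B x x'| ≤ ∑ x'', |B x x''| :=
          Finset.single_le_sum (f := fun y => |B x y|) (fun i _ => abs_nonneg _) (Finset.mem_univ x')
      _ ≤ M := Finset.single_le_sum (f := fun y => ∑ x'', |B y x''|)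
          (fun i _ => Finset.sum_nonneg fun j _ => abs_nonneg _) (Finset.mem_univ x)
  set n : ℕ := Fintype.card X
  set K : NNReal := ⟨n * M, by positivity⟩ with hKdef
  set proj : ℝ → ℝ := fun t => min 1 (max 0 t) with hproj
  have hprojIcc : ∀ t, proj t ∈ Set.Icc (0:ℝ) 1 := fun t =>
    ⟨le_min zero_le_one (le_max_left 0 t), min_le_left _ _⟩
  have hprojEq : ∀ t ∈ Set.Icc (0:ℝ) 1, proj t = t := by
    intro t ht
    simp [hproj, max_eq_right ht.1, min_eq_right ht.2]
  set v : ℝ → (X → ℝ) → (X → ℝ) := fun t y x => ∑ x', W (proj t) x x' * y x' with hv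
  have hlip : ∀ t, LipschitzWith K (v t) := by
    intro t
    apply LipschitzWith.of_dist_le_mul
    intro y z
    rw [dist_pi_le_iff (by positivity)]
    intro x
    rw [Real.dist_eq]
    have : v t y x - v t z x = ∑ x', W (proj t) x x' * (y x' - z x') := by
      simp only [hv, ← Finset.sum_sub_distrib]; congr 1; funext x'; ring
    rw [this]
    calc |∑ x', W (proj t) x x' * (y x' - z x')|
        ≤ ∑ x', |W (proj t) x x' * (y x' - z x')| := Finset.abs_sum_le_sum_abs _ _
      _ ≤ ∑ _x' : X, M * dist y z := by
          apply Finset.sum_le_sum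
          intro x' _
          rw [abs_mul]
          have h1 := hBM x x' (proj t) (hprojIcc t)
          have h2 : |y x' - z x'| ≤ dist y z := by
            rw [← Real.dist_eq]; exact dist_le_pi_dist y z x'
          exact mul_le_mul h1 h2 (abs_nonneg _) (le_trans (abs_nonneg _) h1)
      _ = ↑K * dist y z := by
          rw [Finset.sum_const, Finset.card_univ]
          simp [hKdef, n]
          show _ = (↑(Fintype.card X) * M) * dist y z
          ring
  have key : Set.EqOn f g (Set.Icc 0 1) := by
    apply ODE_solution_unique (v := v) hlip
    · exact continuousOn_pi.mpr fun x t ht => ((hf t ht x).continuousWithinAt)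
    · intro t ht
      have hd : HasDerivWithinAt f (fun x => ∑ x', W t x x' * f t x') (Set.Icc 0 1) t :=
        hasDerivWithinAt_pi.mpr fun x => hf t (Set.Ico_subset_Icc_self ht) x
      have hd2 : HasDerivWithinAt f (fun x => ∑ x', W t x x' * f t x') (Set.Ici t) t :=
        hd.mono_of_mem_nhdsWithin (Icc_mem_nhdsGE_of_mem ht)
      have : v t (f t) = fun x => ∑ x', W t x x' * f t x' := by
        funext x; simp only [hv, hprojEq t (Set.Ico_subset_Icc_self ht)]
      rw [this]; exact hd2
    · exact continuousOn_pi.mpr fun x t ht => ((hg t ht x).continuousWithinAt)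
    · intro t ht
      have hd : HasDerivWithinAt g (fun x => ∑ x', W t x x' * g t x') (Set.Icc 0 1) t :=
        hasDerivWithinAt_pi.mpr fun x => hg t (Set.Ico_subset_Icc_self ht) x
      have hd2 : HasDerivWithinAt g (fun x => ∑ x', W t x x' * g t x') (Set.Ici t) t :=
        hd.mono_of_mem_nhdsWithin (Icc_mem_nhdsGE_of_mem ht)
      have : v t (g t) = fun x => ∑ x', W t x x' * g t x' := by
        funext x; simp only [hv, hprojEq t (Set.Ico_subset_Icc_self ht)]
      rw [this]; exact hd2
    · exact h0
  exact fun t ht => key ht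

lemma entropy_FTC {X : Type*} [Fintype X] [DecidableEq X]
    (W : ℝ → X → X → ℝ) (p : ℝ → X → ℝ)
    (hWoff : ∀ t ∈ Set.Icc (0:ℝ) 1, ∀ x x', x ≠ x' → 0 ≤ W t x x')
    (hWcol : ∀ t ∈ Set.Icc (0:ℝ) 1, ∀ x', ∑ x, W t x x' = 0)
    (hWsym : ∀ t ∈ Set.Icc (0:ℝ) 1, ∀ x x', x ≠ x' → (0 < W t x x' ↔ 0 < W t x' x))
    (hode' : ∀ t ∈ Set.Icc (0:ℝ) 1, ∀ x,
      HasDerivWithinAt (fun s => p s x) (∑ x', W t x x' * p t x') (Set.Icc 0 1) t)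
    (hpos' : ∀ t ∈ Set.Ioc (0:ℝ) 1, ∀ x, 0 < p t x)
    (hint : IntervalIntegrable (fun t => epRate W p t - efRate W p t) volume 0 1) :
    ∫ t in (0:ℝ)..1, (epRate W p t - efRate W p t)
      = shannonH (p 1) - shannonH (p 0) := by
  have hcont : ContinuousOn (fun t => shannonH (p t)) (Set.Icc 0 1) := by
    unfold shannonH
    apply ContinuousOn.neg
    apply continuousOn_finset_sum
    intro x _
    exact Real.continuous_mul_log.comp_continuousOn
      (fun t ht => (hode' t ht x).continuousWithinAt)
  have hderiv : ∀ t ∈ Set.Ioo (0:ℝ) 1,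
      HasDerivWithinAt (fun t => shannonH (p t))
        (epRate W p t - efRate W p t) (Set.Ioi t) t := by
    intro t ht
    have htIcc : t ∈ Set.Icc (0:ℝ) 1 := Set.Ioo_subset_Icc_self ht
    have hmem : Set.Icc (0:ℝ) 1 ∈ nhds t := Icc_mem_nhds ht.1 ht.2
    have hco : ∀ x, HasDerivAt (fun s => p s x * Real.log (p s x))
        ((Real.log (p t x) + 1) * (∑ x', W t x x' * p t x')) t := by
      intro x
      have hx : HasDerivAt (fun s => p s x) (∑ x', W t x x' * p t x') t :=
        (hode' t htIcc x).hasDerivAt hmem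
      have hpt : p t x ≠ 0 := ne_of_gt (hpos' t ⟨ht.1, le_of_lt ht.2⟩ x)
      exact (Real.hasDerivAt_mul_log hpt).comp t hx
    have hsum : HasDerivAt (fun s => shannonH (p s))
        (-∑ x, (Real.log (p t x) + 1) * (∑ x', W t x x' * p t x')) t := by
      unfold shannonH
      exact (HasDerivAt.fun_sum (fun x _ => hco x)).neg
    have heq : -∑ x, (Real.log (p t x) + 1) * (∑ x', W t x x' * p t x')
        = epRate W p t - efRate W p t := by
      rw [← rate_algebra (W t) (p t) (fun x => ∑ x', W t x x' * p t x')
        (hWoff t htIcc) (hWcol t htIcc) (hWsym t htIcc)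
        (fun x => hpos' t ⟨ht.1, le_of_lt ht.2⟩ x) (fun x => rfl)]
      rfl
    rw [← heq]
    exact hsum.hasDerivWithinAt
  exact intervalIntegral.integral_eq_sub_of_hasDeriv_right_of_le zero_le_one
    hcont hderiv hint


end Helpers

/-- the total entropy flow incurred in applying `π` to `p₀`
equals Landauer cost plus mismatch cost plus residual entropy production,
which also equals the drop in cross entropy plus the residual entropy
production. -/
theorem entropy_flow_decomposition
    {X : Type*} [Fintype X] [DecidableEq X]
    (W : ℝ → X → X → ℝ) (P : (X → ℝ) → ℝ → X → ℝ)
    (Q σ : (X → ℝ) → ℝ)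
    (π : X → X → ℝ) (R : Finset X) (qc : X → X → ℝ) (w : X → ℝ)
    (hWcont : ∀ x x', ContinuousOn (fun t => W t x x') (Set.Icc 0 1))
    (hWoff : ∀ t ∈ Set.Icc (0:ℝ) 1, ∀ x x', x ≠ x' → 0 ≤ W t x x')
    (hWcol : ∀ t ∈ Set.Icc (0:ℝ) 1, ∀ x', ∑ x, W t x x' = 0)
    (hWsym : ∀ t ∈ Set.Icc (0:ℝ) 1, ∀ x x', x ≠ x' → (0 < W t x x' ↔ 0 < W t x' x))
    (hP0 : ∀ p₀, IsDist p₀ → P p₀ 0 = p₀)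
    (hode : ∀ p₀, IsDist p₀ → ∀ t ∈ Set.Icc (0:ℝ) 1, ∀ x,
      HasDerivWithinAt (fun s => P p₀ s x) (∑ x', W t x x' * P p₀ t x')
        (Set.Icc 0 1) t)
    (hpos : ∀ p₀, IsDist p₀ → ∀ t ∈ Set.Ioc (0:ℝ) 1, ∀ x, 0 < P p₀ t x)
    (hQint : ∀ p₀, IsDist p₀ → IntervalIntegrable (efRate W (P p₀)) volume 0 1)
    (hQ : ∀ p₀, IsDist p₀ → Q p₀ = ∫ t in (0:ℝ)..1, efRate W (P p₀) t)
    (hσint : ∀ p₀, IsDist p₀ → IntervalIntegrable (epRate W (P p₀)) volume 0 1)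
    (hσ : ∀ p₀, IsDist p₀ → σ p₀ = ∫ t in (0:ℝ)..1, epRate W (P p₀) t)
    (hπ : ∀ x y, 0 ≤ π x y) (hπrow : ∀ x, ∑ y, π x y = 1)
    (hπP : ∀ p₀, IsDist p₀ → ∀ y, (∑ x, π x y * p₀ x) = P p₀ 1 y)
    (hR : ∀ x : X, ∃! r, r ∈ R ∧ x ∈ islandOf π r)
    (hqc_dist : ∀ r ∈ R, IsDist (qc r))
    (hqc_supp : ∀ r ∈ R, ∀ x, qc r x ≠ 0 → x ∈ islandOf π r)
    (hqc_min : ∀ r ∈ R, ∀ s : X → ℝ, IsDist s →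
      (∀ x, s x ≠ 0 → x ∈ islandOf π r) → σ (qc r) ≤ σ s)
    (hw : ∀ r ∈ R, 0 < w r) :
    ∀ p₀ : X → ℝ, IsDist p₀ →
      (∀ r ∈ R, 0 < ∑ x, (islandOf π r).indicator p₀ x →
        ∀ x ∈ islandOf π r, qc r x = 0 → p₀ x = 0) →
      Q p₀ =
        (shannonH p₀ - shannonH (fun y => ∑ x, π x y * p₀ x))
        + (klDiv' p₀ (fun x => ∑ r ∈ R, w r * qc r x)
            - klDiv' (fun y => ∑ x, π x y * p₀ x)
                (fun y => ∑ x, π x y * (∑ r ∈ R, w r * qc r x)))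
        + ∑ r ∈ R, (∑ x, (islandOf π r).indicator p₀ x) * σ (qc r)
      ∧
      Q p₀ =
        (crossEnt p₀ (fun x => ∑ r ∈ R, w r * qc r x)
          - crossEnt (fun y => ∑ x, π x y * p₀ x)
              (fun y => ∑ x, π x y * (∑ r ∈ R, w r * qc r x)))
        + ∑ r ∈ R, (∑ x, (islandOf π r).indicator p₀ x) * σ (qc r) := by
  classical
  intro p₀ hp₀ hsupp₀
  have hXne : Nonempty X := by
    by_contra h
    rw [not_nonempty_iff] at h
    have h2 := hp₀.2
    rw [Finset.univ_eq_empty, Finset.sum_empty] at h2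
    norm_num at h2
  -- island basics
  have island_unique : ∀ (x r r' : X), r ∈ R → r' ∈ R →
      x ∈ islandOf π r → x ∈ islandOf π r' → r = r' := by
    intro x r r' hr hr' hx hx'
    obtain ⟨r₀, _, hu⟩ := hR x
    rw [hu r ⟨hr, hx⟩, hu r' ⟨hr', hx'⟩]
  have island_step : ∀ (x y r : X), x ∈ islandOf π r → islandRel π y x →
      y ∈ islandOf π r := by
    intro x y r hx hrel
    exact Relation.EqvGen.trans _ _ _ (Relation.EqvGen.rel _ _ hrel) hx
  have hq_island : ∀ r ∈ R, ∀ x ∈ islandOf π r,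
      (∑ r' ∈ R, w r' * qc r' x) = w r * qc r x := by
    intro r hr x hx
    apply Finset.sum_eq_single_of_mem r hr
    intro r' hr' hne
    by_cases h0 : qc r' x = 0
    · rw [h0, mul_zero]
    · exact absurd (island_unique x r' r hr' hr (hqc_supp r' hr' x h0) hx) hne
  have hqfnn : ∀ x, 0 ≤ ∑ r' ∈ R, w r' * qc r' x := fun x =>
    Finset.sum_nonneg fun r hr => mul_nonneg (le_of_lt (hw r hr)) ((hqc_dist r hr).1 x)
  have hact_nn : ∀ (s : X → ℝ), (∀ x, 0 ≤ s x) → ∀ y, 0 ≤ ∑ x, π x y * s x :=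
    fun s hs y => Finset.sum_nonneg fun x _ => mul_nonneg (hπ x y) (hs x)
  have hact_sum : ∀ (s : X → ℝ), (∑ y, ∑ x, π x y * s x) = ∑ x, s x := by
    intro s
    rw [Finset.sum_comm]
    apply Finset.sum_congr rfl
    intro x _
    rw [← Finset.sum_mul, hπrow x, one_mul]
  -- reachability: if a point y is reachable from the island of r, the
  -- aggregate distribution on y comes only from island r
  have hact_q_island : ∀ r ∈ R, ∀ (y x₀ : X), x₀ ∈ islandOf π r → 0 < π x₀ y →
      (∑ x, π x y * ∑ r' ∈ R, w r' * qc r' x) = w r * ∑ x, π x y * qc r x := by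
    intro r hr y x₀ hx₀ hπx₀
    have swap : (∑ x, π x y * ∑ r' ∈ R, w r' * qc r' x)
        = ∑ r' ∈ R, w r' * ∑ x, π x y * qc r' x :=
      lin_swap' R w (fun r' x => qc r' x) (fun x => π x y)
    rw [swap]
    apply Finset.sum_eq_single_of_mem r hr
    intro r' hr' hne
    have hz : (∑ x, π x y * qc r' x) = 0 := by
      apply Finset.sum_eq_zero
      intro x _
      by_cases h0 : qc r' x = 0
      · rw [h0, mul_zero]
      by_cases hπ0 : π x y = 0
      · rw [hπ0, zero_mul]
      exfalso
      have hπpos : 0 < π x y := lt_of_le_of_ne (hπ x y) (Ne.symm hπ0)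
      have hxr : x ∈ islandOf π r := island_step x₀ x r hx₀ ⟨y, hπpos, hπx₀⟩
      exact hne (island_unique x r' r hr' hr (hqc_supp r' hr' x h0) hxr)
    rw [hz, mul_zero]
  -- uniqueness of solutions
  have uniq : ∀ s, IsDist s → ∀ g : ℝ → X → ℝ,
      (∀ t ∈ Set.Icc (0:ℝ) 1, ∀ x, HasDerivWithinAt (fun u => g u x)
        (∑ x', W t x x' * g t x') (Set.Icc 0 1) t) →
      g 0 = s → ∀ t ∈ Set.Icc (0:ℝ) 1, g t = P s t := by
    intro s hs g hg h0
    exact ode_unique W hWcont g (fun t => P s t) hg (hode s hs)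
      (by show g 0 = P s 0; rw [h0, hP0 s hs])
  -- finite linear combinations of solutions
  have Pcomb : ∀ (c : X → ℝ) (ρ : X → X → ℝ), (∀ r ∈ R, IsDist (ρ r)) →
      IsDist (fun x => ∑ r ∈ R, c r * ρ r x) →
      ∀ t ∈ Set.Icc (0:ℝ) 1, ∀ x,
        P (fun x => ∑ r ∈ R, c r * ρ r x) t x = ∑ r ∈ R, c r * P (ρ r) t x := by
    intro c ρ hρ hcombo
    have key := uniq _ hcombo (fun t x => ∑ r ∈ R, c r * P (ρ r) t x) ?_ ?_
    · intro t ht x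
      exact (congrFun (key t ht) x).symm
    · intro t ht x
      have hsum : HasDerivWithinAt (fun u => ∑ r ∈ R, c r * P (ρ r) u x)
          (∑ r ∈ R, c r * (∑ x', W t x x' * P (ρ r) t x')) (Set.Icc 0 1) t :=
        HasDerivWithinAt.fun_sum fun r hr =>
          (hode (ρ r) (hρ r hr) t ht x).const_mul (c r)
      have heq : (∑ x', W t x x' * (∑ r ∈ R, c r * P (ρ r) t x'))
          = ∑ r ∈ R, c r * (∑ x', W t x x' * P (ρ r) t x') :=
        lin_swap' R c (fun r x' => P (ρ r) t x') (fun x' => W t x x')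
      rw [heq]
      exact hsum
    · funext x
      exact Finset.sum_congr rfl fun r hr => by rw [hP0 (ρ r) (hρ r hr)]
  have Qcomb : ∀ (c : X → ℝ) (ρ : X → X → ℝ), (∀ r ∈ R, IsDist (ρ r)) →
      IsDist (fun x => ∑ r ∈ R, c r * ρ r x) →
      Q (fun x => ∑ r ∈ R, c r * ρ r x) = ∑ r ∈ R, c r * Q (ρ r) := by
    intro c ρ hρ hcombo
    rw [hQ _ hcombo]
    have step : ∫ t in (0:ℝ)..1, efRate W (P fun x => ∑ r ∈ R, c r * ρ r x) t
        = ∫ t in (0:ℝ)..1, ∑ r ∈ R, c r * efRate W (P (ρ r)) t := by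
      apply intervalIntegral.integral_congr
      intro t ht
      rw [Set.uIcc_of_le zero_le_one] at ht
      exact efRate_comb W _ t R c (fun r => P (ρ r)) (Pcomb c ρ hρ hcombo t ht)
    rw [step, intervalIntegral.integral_finset_sum
      (fun r hr => (hQint (ρ r) (hρ r hr)).const_mul (c r))]
    apply Finset.sum_congr rfl
    intro r hr
    rw [intervalIntegral.integral_const_mul, hQ (ρ r) (hρ r hr)]
  -- binary combinations
  have Pcomb2 : ∀ (a b : ℝ) (r₁ r₂ : X → ℝ), IsDist r₁ → IsDist r₂ →
      IsDist (fun x => a * r₁ x + b * r₂ x) →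
      ∀ t ∈ Set.Icc (0:ℝ) 1, ∀ x,
        P (fun x => a * r₁ x + b * r₂ x) t x = a * P r₁ t x + b * P r₂ t x := by
    intro a b r₁ r₂ h₁ h₂ hcombo
    have key := uniq _ hcombo (fun t x => a * P r₁ t x + b * P r₂ t x) ?_ ?_
    · intro t ht x
      exact (congrFun (key t ht) x).symm
    · intro t ht x
      have hsum : HasDerivWithinAt (fun u => a * P r₁ u x + b * P r₂ u x)
          (a * (∑ x', W t x x' * P r₁ t x') + b * (∑ x', W t x x' * P r₂ t x'))
          (Set.Icc 0 1) t :=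
        ((hode r₁ h₁ t ht x).const_mul a).add ((hode r₂ h₂ t ht x).const_mul b)
      have heq : (∑ x', W t x x' * (a * P r₁ t x' + b * P r₂ t x'))
          = a * (∑ x', W t x x' * P r₁ t x') + b * (∑ x', W t x x' * P r₂ t x') := by
        rw [Finset.mul_sum, Finset.mul_sum, ← Finset.sum_add_distrib]
        exact Finset.sum_congr rfl fun x' _ => by ring
      rw [heq]
      exact hsum
    · funext x
      show a * P r₁ 0 x + b * P r₂ 0 x = a * r₁ x + b * r₂ x
      rw [hP0 r₁ h₁, hP0 r₂ h₂]
  have Qcomb2 : ∀ (a b : ℝ) (r₁ r₂ : X → ℝ), IsDist r₁ → IsDist r₂ →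
      IsDist (fun x => a * r₁ x + b * r₂ x) →
      Q (fun x => a * r₁ x + b * r₂ x) = a * Q r₁ + b * Q r₂ := by
    intro a b r₁ r₂ h₁ h₂ hcombo
    rw [hQ _ hcombo]
    have step : ∫ t in (0:ℝ)..1, efRate W (P fun x => a * r₁ x + b * r₂ x) t
        = ∫ t in (0:ℝ)..1, (a * efRate W (P r₁) t + b * efRate W (P r₂) t) := by
      apply intervalIntegral.integral_congr
      intro t ht
      rw [Set.uIcc_of_le zero_le_one] at ht
      unfold efRate
      have key : ∀ (x x' : X), (if x = x' then 0 else
            W t x x' * P (fun x => a * r₁ x + b * r₂ x) t x'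
              * Real.log (W t x x' / W t x' x))
          = a * (if x = x' then 0 else
              W t x x' * P r₁ t x' * Real.log (W t x x' / W t x' x))
            + b * (if x = x' then 0 else
              W t x x' * P r₂ t x' * Real.log (W t x x' / W t x' x)) := by
        intro x x'
        by_cases hxx : x = x'
        · simp [hxx]
        · simp only [if_neg hxx, Pcomb2 a b r₁ r₂ h₁ h₂ hcombo t ht x']
          ring
      simp only [key, Finset.sum_add_distrib, ← Finset.mul_sum]
    rw [step, intervalIntegral.integral_add
        ((hQint r₁ h₁).const_mul a) ((hQint r₂ h₂).const_mul b),
      intervalIntegral.integral_const_mul, intervalIntegral.integral_const_mul,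
      hQ r₁ h₁, hQ r₂ h₂]
  -- entropy balance: σ = Q + S(final) - S(initial)
  have sigmaQ : ∀ s, IsDist s →
      σ s = Q s + shannonH (fun y => ∑ x, π x y * s x) - shannonH s := by
    intro s hs
    have hftc := entropy_FTC W (P s) hWoff hWcol hWsym (hode s hs) (hpos s hs)
      ((hσint s hs).sub (hQint s hs))
    rw [intervalIntegral.integral_sub (hσint s hs) (hQint s hs)] at hftc
    have h1 : P s 1 = fun y => ∑ x, π x y * s x := funext fun y => (hπP s hs y).symm
    have h0' : P s 0 = s := hP0 s hs
    rw [h1, h0'] at hftc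
    rw [hσ s hs, hQ s hs]
    linarith
  -- the linear functional Λ
  set Λ : (X → ℝ) → ℝ := fun s => Q s
      + (∑ x, s x * Real.log (∑ r' ∈ R, w r' * qc r' x))
      - (∑ y, (∑ x, π x y * s x)
          * Real.log (∑ x, π x y * (∑ r' ∈ R, w r' * qc r' x))) with hΛ
  have Λcomb : ∀ (c : X → ℝ) (ρ : X → X → ℝ), (∀ r ∈ R, IsDist (ρ r)) →
      IsDist (fun x => ∑ r ∈ R, c r * ρ r x) →
      Λ (fun x => ∑ r ∈ R, c r * ρ r x) = ∑ r ∈ R, c r * Λ (ρ r) := by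
    intro c ρ hρ hcombo
    simp only [hΛ]
    rw [Qcomb c ρ hρ hcombo]
    have m1 : (∑ x, (∑ r ∈ R, c r * ρ r x)
          * Real.log (∑ r' ∈ R, w r' * qc r' x))
        = ∑ r ∈ R, c r * ∑ x, ρ r x * Real.log (∑ r' ∈ R, w r' * qc r' x) :=
      lin_swap R c ρ _
    have m2in : ∀ y, (∑ x, π x y * (∑ r ∈ R, c r * ρ r x))
        = ∑ r ∈ R, c r * (∑ x, π x y * ρ r x) := fun y =>
      lin_swap' R c ρ (fun x => π x y)
    have m2 : (∑ y, (∑ x, π x y * (∑ r ∈ R, c r * ρ r x))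
          * Real.log (∑ x, π x y * (∑ r' ∈ R, w r' * qc r' x)))
        = ∑ r ∈ R, c r * ∑ y, (∑ x, π x y * ρ r x)
          * Real.log (∑ x, π x y * (∑ r' ∈ R, w r' * qc r' x)) := by
      simp only [m2in]
      exact lin_swap R c (fun r y => ∑ x, π x y * ρ r x) _
    rw [m1, m2, ← Finset.sum_add_distrib, ← Finset.sum_sub_distrib]
    exact Finset.sum_congr rfl fun r _ => by ring
  have Λcomb2 : ∀ (a b : ℝ) (r₁ r₂ : X → ℝ), IsDist r₁ → IsDist r₂ →
      IsDist (fun x => a * r₁ x + b * r₂ x) →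
      Λ (fun x => a * r₁ x + b * r₂ x) = a * Λ r₁ + b * Λ r₂ := by
    intro a b r₁ r₂ h₁ h₂ hcombo
    simp only [hΛ]
    rw [Qcomb2 a b r₁ r₂ h₁ h₂ hcombo]
    have m1 : (∑ x, (a * r₁ x + b * r₂ x) * Real.log (∑ r' ∈ R, w r' * qc r' x))
        = a * (∑ x, r₁ x * Real.log (∑ r' ∈ R, w r' * qc r' x))
          + b * (∑ x, r₂ x * Real.log (∑ r' ∈ R, w r' * qc r' x)) := by
      rw [Finset.mul_sum, Finset.mul_sum, ← Finset.sum_add_distrib]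
      exact Finset.sum_congr rfl fun x _ => by ring
    have m2in : ∀ y, (∑ x, π x y * (a * r₁ x + b * r₂ x))
        = a * (∑ x, π x y * r₁ x) + b * (∑ x, π x y * r₂ x) := by
      intro y
      rw [Finset.mul_sum, Finset.mul_sum, ← Finset.sum_add_distrib]
      exact Finset.sum_congr rfl fun x _ => by ring
    have m2 : (∑ y, (∑ x, π x y * (a * r₁ x + b * r₂ x))
          * Real.log (∑ x, π x y * (∑ r' ∈ R, w r' * qc r' x)))
        = a * (∑ y, (∑ x, π x y * r₁ x)
            * Real.log (∑ x, π x y * (∑ r' ∈ R, w r' * qc r' x)))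
          + b * (∑ y, (∑ x, π x y * r₂ x)
            * Real.log (∑ x, π x y * (∑ r' ∈ R, w r' * qc r' x))) := by
      simp only [m2in]
      rw [Finset.mul_sum, Finset.mul_sum, ← Finset.sum_add_distrib]
      exact Finset.sum_congr rfl fun y _ => by ring
    rw [m1, m2]
    ring
  -- existence of a contributing point
  have reach : ∀ (s : X → ℝ), (∀ x, 0 ≤ s x) → ∀ y, (∑ x, π x y * s x) ≠ 0 →
      ∃ x₀, 0 < π x₀ y ∧ s x₀ ≠ 0 := by
    intro s hsn y hy
    by_contra hc
    push_neg at hc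
    apply hy
    apply Finset.sum_eq_zero
    intro x _
    by_cases hπ0 : π x y = 0
    · rw [hπ0, zero_mul]
    · rw [hc x (lt_of_le_of_ne (hπ x y) (Ne.symm hπ0)), mul_zero]
  -- island formula for Λ
  have islandΛ : ∀ r ∈ R, ∀ s : X → ℝ, IsDist s → (∀ x, s x ≠ 0 → qc r x ≠ 0) →
      Λ s = σ s - klDiv' s (qc r)
        + klDiv' (fun y => ∑ x, π x y * s x) (fun y => ∑ x, π x y * qc r x) := by
    intro r hr s hs hss
    have hqcd := hqc_dist r hr
    have hwr := hw r hr
    have hsisland : ∀ x, s x ≠ 0 → x ∈ islandOf π r := fun x hx =>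
      hqc_supp r hr x (hss x hx)
    have B1 : (∑ x, s x * Real.log (∑ r' ∈ R, w r' * qc r' x))
        = Real.log (w r) + ∑ x, s x * Real.log (qc r x) := by
      have hterm : ∀ x, s x * Real.log (∑ r' ∈ R, w r' * qc r' x)
          = Real.log (w r) * s x + s x * Real.log (qc r x) := by
        intro x
        by_cases hsx : s x = 0
        · simp [hsx]
        · rw [hq_island r hr x (hsisland x hsx),
              Real.log_mul (ne_of_gt hwr) (hss x hsx)]
          ring
      simp only [hterm]
      rw [Finset.sum_add_distrib, ← Finset.mul_sum, hs.2, mul_one]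
    have B2 : (∑ y, (∑ x, π x y * s x)
          * Real.log (∑ x, π x y * (∑ r' ∈ R, w r' * qc r' x)))
        = Real.log (w r)
          + ∑ y, (∑ x, π x y * s x) * Real.log (∑ x, π x y * qc r x) := by
      have hterm : ∀ y, (∑ x, π x y * s x)
            * Real.log (∑ x, π x y * (∑ r' ∈ R, w r' * qc r' x))
          = Real.log (w r) * (∑ x, π x y * s x)
            + (∑ x, π x y * s x) * Real.log (∑ x, π x y * qc r x) := by
        intro y
        by_cases hsy : (∑ x, π x y * s x) = 0
        · simp [hsy]
        · obtain ⟨x₀, hπ0, hs0⟩ := reach s hs.1 y hsy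
          have hqpos : 0 < ∑ x, π x y * qc r x := by
            have hle : π x₀ y * qc r x₀ ≤ ∑ x, π x y * qc r x :=
              Finset.single_le_sum (fun x _ => mul_nonneg (hπ x y) (hqcd.1 x))
                (Finset.mem_univ x₀)
            have h2 : 0 < π x₀ y * qc r x₀ :=
              mul_pos hπ0 (lt_of_le_of_ne (hqcd.1 x₀) (Ne.symm (hss x₀ hs0)))
            linarith
          rw [hact_q_island r hr y x₀ (hsisland x₀ hs0) hπ0,
              Real.log_mul (ne_of_gt hwr) (ne_of_gt hqpos)]
          ring
      simp only [hterm]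
      rw [Finset.sum_add_distrib, ← Finset.mul_sum, hact_sum s, hs.2, mul_one]
    have E1 : klDiv' s (qc r) = crossEnt s (qc r) - shannonH s :=
      klDiv'_eq_cross_sub_shannon hs.1 (fun x h0 => by
        by_contra hsx; exact (hss x hsx) h0)
    have E2 : klDiv' (fun y => ∑ x, π x y * s x) (fun y => ∑ x, π x y * qc r x)
        = crossEnt (fun y => ∑ x, π x y * s x) (fun y => ∑ x, π x y * qc r x)
          - shannonH (fun y => ∑ x, π x y * s x) := by
      apply klDiv'_eq_cross_sub_shannon (hact_nn s hs.1)
      intro y h0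
      by_contra hsy
      obtain ⟨x₀, hπ0, hs0⟩ := reach s hs.1 y hsy
      have hle : π x₀ y * qc r x₀ ≤ ∑ x, π x y * qc r x :=
        Finset.single_le_sum (fun x _ => mul_nonneg (hπ x y) (hqcd.1 x))
          (Finset.mem_univ x₀)
      have h2 : 0 < π x₀ y * qc r x₀ :=
        mul_pos hπ0 (lt_of_le_of_ne (hqcd.1 x₀) (Ne.symm (hss x₀ hs0)))
      rw [h0] at hle
      linarith
    have hσs := sigmaQ s hs
    simp only [hΛ]
    unfold crossEnt at E1 E2
    simp only at E1 E2
    rw [B1, B2, E1, E2, hσs]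
    ring
  -- perturbation argument: Λ is constant (= minimal EP) on each island
  have pert : ∀ r ∈ R, ∀ s : X → ℝ, IsDist s → (∀ x, s x ≠ 0 → qc r x ≠ 0) →
      Λ s = σ (qc r) := by
    intro r hr s hs hss
    have hqcd := hqc_dist r hr
    have hΛqc : Λ (qc r) = σ (qc r) := by
      rw [islandΛ r hr (qc r) hqcd (fun x h => h), klDiv'_self, klDiv'_self]
      ring
    have hqcpos : ∀ x, qc r x ≠ 0 → 0 < qc r x := fun x h =>
      lt_of_le_of_ne (hqcd.1 x) (Ne.symm h)
    set u : X → ℝ := fun x => s x - qc r x with hu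
    have husupp : ∀ x, qc r x = 0 → u x = 0 := by
      intro x h0
      have hsx : s x = 0 := by by_contra hsx; exact (hss x hsx) h0
      simp [hu, hsx, h0]
    set δ : ℝ := Finset.univ.inf' Finset.univ_nonempty
      (fun x => if qc r x = 0 then 1 else qc r x / (2 * (|u x| + 1))) with hδ
    have hδpos : 0 < δ := by
      rw [hδ, Finset.lt_inf'_iff]
      intro x _
      split_ifs with h0
      · norm_num
      · exact div_pos (hqcpos x h0) (by positivity)
    have hδle : ∀ x, qc r x ≠ 0 → δ ≤ qc r x / (2 * (|u x| + 1)) := by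
      intro x h0
      refine le_trans (Finset.inf'_le _ (Finset.mem_univ x)) ?_
      rw [if_neg h0]
    have hbound : ∀ ε : ℝ, |ε| ≤ δ → ∀ x, 0 ≤ qc r x + ε * u x := by
      intro ε hε x
      by_cases h0 : qc r x = 0
      · rw [h0, husupp x h0, mul_zero, add_zero]
      · have h1 : |ε * u x| ≤ (qc r x / (2 * (|u x| + 1))) * |u x| := by
          rw [abs_mul]
          exact mul_le_mul_of_nonneg_right (le_trans hε (hδle x h0)) (abs_nonneg _)
        have h2 : (qc r x / (2 * (|u x| + 1))) * |u x| ≤ qc r x / 2 := by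
          rw [div_mul_eq_mul_div, div_le_div_iff₀ (by positivity) (by norm_num)]
          nlinarith [abs_nonneg (u x), hqcpos x h0]
        have h3 := neg_abs_le (ε * u x)
        have h4 := hqcpos x h0
        linarith
    set C : ℝ := ∑ x, u x ^ 2 / qc r x with hC
    have hCnn : 0 ≤ C :=
      Finset.sum_nonneg fun x _ => div_nonneg (sq_nonneg _) (hqcd.1 x)
    have key : ∀ ε : ℝ, |ε| ≤ δ → 0 ≤ ε * (Λ s - Λ (qc r)) + C * ε ^ 2 := by
      intro ε hε
      have hεrw : ∀ x, (1 - ε) * qc r x + ε * s x = qc r x + ε * u x := by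
        intro x; simp only [hu]; ring
      have hsεdist : IsDist (fun x => (1 - ε) * qc r x + ε * s x) := by
        constructor
        · intro x
          show 0 ≤ (1 - ε) * qc r x + ε * s x
          rw [hεrw x]
          exact hbound ε hε x
        · show ∑ x, ((1 - ε) * qc r x + ε * s x) = 1
          rw [Finset.sum_add_distrib, ← Finset.mul_sum, ← Finset.mul_sum,
            hqcd.2, hs.2]
          ring
      have hsεsupp : ∀ x, ((1 - ε) * qc r x + ε * s x) ≠ 0 → qc r x ≠ 0 := by
        intro x hne h0
        have hsx : s x = 0 := by by_contra hsx; exact (hss x hsx) h0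
        rw [h0, hsx] at hne
        simp at hne
      have hmin : σ (qc r) ≤ σ (fun x => (1 - ε) * qc r x + ε * s x) :=
        hqc_min r hr _ hsεdist (fun x h => hqc_supp r hr x (hsεsupp x h))
      have hisl := islandΛ r hr _ hsεdist hsεsupp
      have hlin := Λcomb2 (1 - ε) ε (qc r) s hqcd hs hsεdist
      have hD1 : klDiv' (fun x => (1 - ε) * qc r x + ε * s x) (qc r)
          ≤ C * ε ^ 2 := by
        refine le_trans (klDiv'_le_chi hsεdist.1 hqcd.1
          (by rw [hsεdist.2, hqcd.2]) ?_) ?_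
        · intro x h0
          by_contra hne
          exact (hsεsupp x hne) h0
        · have hterm : ∀ x : X, ((1 - ε) * qc r x + ε * s x - qc r x) ^ 2 / qc r x
              = (u x ^ 2 / qc r x) * ε ^ 2 := by
            intro x
            have hx : (1 - ε) * qc r x + ε * s x - qc r x = ε * u x := by
              simp only [hu]; ring
            rw [hx, mul_pow]
            ring
          simp only [hterm]
          rw [← Finset.sum_mul, hC]
      have hD2 : 0 ≤ klDiv' (fun y => ∑ x, π x y * ((1 - ε) * qc r x + ε * s x))
          (fun y => ∑ x, π x y * qc r x) := by
        apply klDiv'_nonneg (hact_nn _ hsεdist.1) (hact_nn _ hqcd.1)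
        · rw [hact_sum, hact_sum, hsεdist.2, hqcd.2]
        · intro y h0
          by_contra hsy
          obtain ⟨x₀, hπ0, hs0⟩ := reach _ hsεdist.1 y hsy
          have h2 : 0 < π x₀ y * qc r x₀ :=
            mul_pos hπ0 (hqcpos x₀ (hsεsupp x₀ hs0))
          have hle : π x₀ y * qc r x₀ ≤ ∑ x, π x y * qc r x :=
            Finset.single_le_sum (fun x _ => mul_nonneg (hπ x y) (hqcd.1 x))
              (Finset.mem_univ x₀)
          rw [h0] at hle
          linarith
      linarith [hmin, hΛqc, hisl, hlin, hD1, hD2]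
    have hB := B_eq_zero (Λ s - Λ (qc r)) C δ hδpos hCnn key
    have hfin : Λ s = Λ (qc r) := by linarith
    rw [hfin, hΛqc]
  -- decomposition of p₀ into island conditionals
  have hmass_nn : ∀ r : X, 0 ≤ ∑ x, (islandOf π r).indicator p₀ x :=
    fun r => Finset.sum_nonneg fun x _ =>
      Set.indicator_nonneg (fun a _ => hp₀.1 a) x
  have hind_le : ∀ (r x : X),
      (islandOf π r).indicator p₀ x ≤ ∑ x', (islandOf π r).indicator p₀ x' :=
    fun r x => Finset.single_le_sum
      (fun i _ => Set.indicator_nonneg (fun a _ => hp₀.1 a) i) (Finset.mem_univ x)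
  set ρ : X → X → ℝ := fun r x =>
    if (∑ x', (islandOf π r).indicator p₀ x') = 0 then qc r x
    else (islandOf π r).indicator p₀ x / (∑ x', (islandOf π r).indicator p₀ x')
    with hρdef
  have hρdist : ∀ r ∈ R, IsDist (ρ r) := by
    intro r hr
    by_cases h0 : (∑ x', (islandOf π r).indicator p₀ x') = 0
    · have hrw : ρ r = qc r := by funext x; simp [hρdef, h0]
      rw [hrw]
      exact hqc_dist r hr
    · constructor
      · intro x
        simp only [hρdef, if_neg h0]
        exact div_nonneg (Set.indicator_nonneg (fun a _ => hp₀.1 a) x) (hmass_nn r)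
      · simp only [hρdef, if_neg h0]
        rw [← Finset.sum_div, div_self h0]
  have hdecomp : ∀ x, p₀ x
      = ∑ r ∈ R, (∑ x', (islandOf π r).indicator p₀ x') * ρ r x := by
    intro x
    have hterm : ∀ r : X, (∑ x', (islandOf π r).indicator p₀ x') * ρ r x
        = (islandOf π r).indicator p₀ x := by
      intro r
      by_cases h0 : (∑ x', (islandOf π r).indicator p₀ x') = 0
      · rw [h0, zero_mul]
        have h1 := hind_le r x
        have h2 : 0 ≤ (islandOf π r).indicator p₀ x :=
          Set.indicator_nonneg (fun a _ => hp₀.1 a) x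
        rw [h0] at h1
        linarith
      · simp only [hρdef, if_neg h0]
        field_simp
    simp only [hterm]
    obtain ⟨r₀, ⟨hr₀R, hr₀x⟩, hu⟩ := hR x
    rw [Finset.sum_eq_single_of_mem r₀ hr₀R]
    · rw [Set.indicator_of_mem hr₀x]
    · intro r' hr' hne
      rw [Set.indicator_of_notMem]
      intro hmem
      exact hne (hu r' ⟨hr', hmem⟩)
  have hp₀eq : p₀ = fun x => ∑ r ∈ R, (∑ x', (islandOf π r).indicator p₀ x') * ρ r x :=
    funext hdecomp
  have hΛρ : ∀ r ∈ R, Λ (ρ r) = σ (qc r) := by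
    intro r hr
    apply pert r hr (ρ r) (hρdist r hr)
    intro x hx
    by_cases h0 : (∑ x', (islandOf π r).indicator p₀ x') = 0
    · simp only [hρdef, if_pos h0] at hx
      exact hx
    · simp only [hρdef, if_neg h0] at hx
      have hmasspos : 0 < ∑ x', (islandOf π r).indicator p₀ x' :=
        lt_of_le_of_ne (hmass_nn r) (Ne.symm h0)
      have hind : (islandOf π r).indicator p₀ x ≠ 0 := by
        intro h; rw [h] at hx; simp at hx
      have hxisl : x ∈ islandOf π r := by
        by_contra hmem
        rw [Set.indicator_of_notMem hmem] at hind
        exact hind rfl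
      have hp₀x : p₀ x ≠ 0 := by
        rw [Set.indicator_of_mem hxisl] at hind
        exact hind
      intro hq0
      exact hp₀x (hsupp₀ r hr hmasspos x hxisl hq0)
  have hΛp₀ : Λ p₀ = ∑ r ∈ R, (∑ x', (islandOf π r).indicator p₀ x') * σ (qc r) := by
    have hcombo : IsDist (fun x => ∑ r ∈ R, (∑ x', (islandOf π r).indicator p₀ x') * ρ r x) := by
      rw [← hp₀eq]; exact hp₀
    calc Λ p₀ = Λ (fun x => ∑ r ∈ R, (∑ x', (islandOf π r).indicator p₀ x') * ρ r x) := by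
          rw [← hp₀eq]
      _ = ∑ r ∈ R, (∑ x', (islandOf π r).indicator p₀ x') * Λ (ρ r) :=
          Λcomb _ ρ hρdist hcombo
      _ = ∑ r ∈ R, (∑ x', (islandOf π r).indicator p₀ x') * σ (qc r) :=
          Finset.sum_congr rfl fun r hr => by rw [hΛρ r hr]
  -- support facts for the final rewriting
  have hp₀supp : ∀ x, (∑ r' ∈ R, w r' * qc r' x) = 0 → p₀ x = 0 := by
    intro x h0
    by_contra hp0
    obtain ⟨r₀, ⟨hr₀R, hr₀x⟩, _⟩ := hR x
    have hmasspos : 0 < ∑ x', (islandOf π r₀).indicator p₀ x' := by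
      have h1 := hind_le r₀ x
      rw [Set.indicator_of_mem hr₀x] at h1
      have h2 : 0 < p₀ x := lt_of_le_of_ne (hp₀.1 x) (Ne.symm hp0)
      linarith
    have hqc0 : qc r₀ x ≠ 0 := fun hq0 =>
      hp0 (hsupp₀ r₀ hr₀R hmasspos x hr₀x hq0)
    rw [hq_island r₀ hr₀R x hr₀x] at h0
    exact hqc0 ((mul_eq_zero.mp h0).resolve_left (ne_of_gt (hw r₀ hr₀R)))
  have hp₁supp : ∀ y, (∑ x, π x y * (∑ r' ∈ R, w r' * qc r' x)) = 0 →
      (∑ x, π x y * p₀ x) = 0 := by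
    intro y h0
    by_contra hp1
    obtain ⟨x₀, hπ0, hs0⟩ := reach p₀ hp₀.1 y hp1
    have hqf0 : (∑ r' ∈ R, w r' * qc r' x₀) ≠ 0 := fun h => hs0 (hp₀supp x₀ h)
    have hqfpos : 0 < (∑ r' ∈ R, w r' * qc r' x₀) :=
      lt_of_le_of_ne (hqfnn x₀) (Ne.symm hqf0)
    have hle : π x₀ y * (∑ r' ∈ R, w r' * qc r' x₀)
        ≤ ∑ x, π x y * (∑ r' ∈ R, w r' * qc r' x) :=
      Finset.single_le_sum (fun x _ => mul_nonneg (hπ x y) (hqfnn x))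
        (Finset.mem_univ x₀)
    rw [h0] at hle
    nlinarith [mul_pos hπ0 hqfpos]
  -- assembling the two claimed identities
  have main2 : Q p₀ = (crossEnt p₀ (fun x => ∑ r ∈ R, w r * qc r x)
        - crossEnt (fun y => ∑ x, π x y * p₀ x)
          (fun y => ∑ x, π x y * (∑ r ∈ R, w r * qc r x)))
      + ∑ r ∈ R, (∑ x, (islandOf π r).indicator p₀ x) * σ (qc r) := by
    have h1 := hΛp₀
    simp only [hΛ] at h1
    unfold crossEnt
    simp only
    linarith [h1]
  refine ⟨?_, main2⟩
  have k0 : klDiv' p₀ (fun x => ∑ r ∈ R, w r * qc r x)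
      = crossEnt p₀ (fun x => ∑ r ∈ R, w r * qc r x) - shannonH p₀ :=
    klDiv'_eq_cross_sub_shannon hp₀.1 hp₀supp
  have k1 : klDiv' (fun y => ∑ x, π x y * p₀ x)
        (fun y => ∑ x, π x y * (∑ r ∈ R, w r * qc r x))
      = crossEnt (fun y => ∑ x, π x y * p₀ x)
          (fun y => ∑ x, π x y * (∑ r ∈ R, w r * qc r x))
        - shannonH (fun y => ∑ x, π x y * p₀ x) :=
    klDiv'_eq_cross_sub_shannon (hact_nn p₀ hp₀.1) hp₁supp
  rw [k0, k1]
  linarith [main2]
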